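/- A finite simple graph G is chordal if and only if G admits a perfect elimination ordering. -/

import Mathlib

set_option linter.unusedSectionVars false
set_option linter.unusedVariables false
set_option maxHeartbeats 1000000

open SimpleGraph Walk
open Fin.NatCast Fin.CommRing

def Chordal' {V : Type} (G : SimpleGraph V) : Prop :=
  ∀ n : ℕ, 4 ≤ n → IsEmpty (SimpleGraph.cycleGraph n ↪g G)

lemma cga {m : ℕ} {u v : Fin (m+4)} :
    (cycleGraph (m+4)).Adj u v ↔ u - v = 1 ∨ v - u = 1 :=
  cycleGraph_adj (n := m + 2)

lemma fin_cast_ne_zero {m t : ℕ} (h1 : 0 < t) (h2 : t < m + 4) :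
    ((t : ℕ) : Fin (m+4)) ≠ 0 := by
  rw [Ne, Fin.natCast_eq_zero]
  intro hdvd; have := Nat.le_of_dvd h1 hdvd; omega

lemma peo_chordal {ℓ : ℕ} (G : SimpleGraph (Fin ℓ)) (σ : Equiv.Perm (Fin ℓ))
    (h : ∀ i : Fin ℓ, G.IsClique {u | ∃ j : Fin ℓ, j < i ∧ u = σ j ∧ G.Adj (σ j) (σ i)}) :
    Chordal' G := by
  intro n hn
  obtain ⟨m, rfl⟩ : ∃ m, n = m + 4 := ⟨n - 4, by omega⟩
  constructor
  intro e
  obtain ⟨k, hk⟩ := Finite.exists_max (fun i : Fin (m+4) => σ.symm (e i))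
  have hadj : ∀ i : Fin (m+4), (cycleGraph (m+4)).Adj i (i+1) := by
    intro i; rw [cga]; right; ring
  set i := σ.symm (e k) with hi
  have mem : ∀ d : Fin (m+4), G.Adj (e d) (e k) → d ≠ k →
      e d ∈ {u | ∃ j : Fin ℓ, j < i ∧ u = σ j ∧ G.Adj (σ j) (σ i)} := by
    intro d hadj' hd
    refine ⟨σ.symm (e d), ?_, by simp, ?_⟩
    · refine lt_of_le_of_ne (hk d) ?_
      intro hcontra
      rw [hi] at hcontra
      exact hd (e.injective (σ.symm.injective hcontra))
    · rw [hi]; simpa using hadj'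
  have h1 : G.Adj (e (k-1)) (e k) := by
    refine (e.map_adj_iff).2 ?_
    rw [cga]; right; ring
  have h2 : G.Adj (e (k+1)) (e k) := (e.map_adj_iff).2 ((cycleGraph (m+4)).adj_symm (hadj k))
  have hk1 : (k:Fin (m+4)) - 1 ≠ k := by
    intro hc
    have : ((1:ℕ) : Fin (m+4)) = 0 := by push_cast; linear_combination -hc
    exact fin_cast_ne_zero one_pos (by omega) this
  have hk2 : (k:Fin (m+4)) + 1 ≠ k := by
    intro hc
    have : ((1:ℕ) : Fin (m+4)) = 0 := by push_cast; linear_combination hc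
    exact fin_cast_ne_zero one_pos (by omega) this
  have hne2 : (k:Fin (m+4)) - 1 ≠ k + 1 := by
    intro hc
    have : ((2:ℕ) : Fin (m+4)) = 0 := by push_cast; linear_combination -hc
    exact fin_cast_ne_zero two_pos (by omega) this
  have m1 := mem (k-1) h1 hk1
  have m2 := mem (k+1) h2 hk2
  have hclique : G.Adj (e (k-1)) (e (k+1)) :=
    h i m1 m2 (fun hc => hne2 (e.injective hc))
  have hcyc : (cycleGraph (m+4)).Adj (k-1) (k+1) := e.map_adj_iff.1 hclique
  rw [cga] at hcyc
  rcases hcyc with hc | hc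
  · have : ((3:ℕ) : Fin (m+4)) = 0 := by push_cast; linear_combination -hc
    exact fin_cast_ne_zero (by norm_num) (by omega) this
  · have : ((1:ℕ) : Fin (m+4)) = 0 := by push_cast; linear_combination hc
    exact fin_cast_ne_zero one_pos (by omega) this

namespace ChordalAux
variable {V : Type} [Fintype V] [DecidableEq V] {G : SimpleGraph V}





/-- take the first n darts of a walk -/
def wtake {u v : V} : (p : G.Walk u v) → (n : ℕ) → G.Walk u (p.getVert n)
  | .nil, _ => .nil
  | .cons h q, 0 => Walk.nil.copy rfl ((Walk.cons h q).getVert_zero).symm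
  | .cons h q, (n+1) => (Walk.cons h (wtake q n)).copy rfl (getVert_cons_succ q h).symm

lemma wtake_length {u v : V} (p : G.Walk u v) (n : ℕ) (hn : n ≤ p.length) :
    (wtake p n).length = n := by
  induction p generalizing n with
  | nil => simp at hn; simp [hn, wtake]
  | cons h q ih =>
    cases n with
    | zero => simp [wtake]
    | succ n => simp [wtake, ih n (by simpa using hn)]

lemma wtake_support {u v : V} (p : G.Walk u v) (n : ℕ) :
    (wtake p n).support ⊆ p.support := by
  induction p generalizing n with
  | nil => cases n <;> simp [wtake]
  | cons h q ih =>
    cases n with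
    | zero => intro x hx; simp [wtake] at hx; simp [hx]
    | succ n =>
      intro x hx
      simp only [wtake, support_copy, support_cons, List.mem_cons] at hx
      rcases hx with rfl | hx
      · simp
      · simp [ih n hx]

lemma drop_length {u v : V} (p : G.Walk u v) (n : ℕ) (hn : n ≤ p.length) :
    (p.drop n).length = p.length - n := by
  induction p generalizing n with
  | nil => simp at hn; simp [hn, Walk.drop]
  | cons h q ih =>
    cases n with
    | zero => simp [Walk.drop]
    | succ n => simp [Walk.drop, ih n (by simpa using hn)]

lemma drop_support {u v : V} (p : G.Walk u v) (n : ℕ) :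
    (p.drop n).support ⊆ p.support := by
  induction p generalizing n with
  | nil => cases n <;> simp [Walk.drop, Walk.getVert_of_length_le]
  | cons h q ih =>
    cases n with
    | zero => simp [Walk.drop]
    | succ n =>
      intro x hx
      simp only [Walk.drop, support_copy] at hx
      simp [ih n hx]

lemma getVert_mem_support {u v : V} (p : G.Walk u v) (n : ℕ) (hn : n ≤ p.length) :
    p.getVert n ∈ p.support :=
  mem_support_iff_exists_getVert.2 ⟨n, rfl, hn⟩

lemma IsPath.getVert_inj {u v : V} {p : G.Walk u v} (hp : p.IsPath) {i j : ℕ}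
    (hi : i ≤ p.length) (hj : j ≤ p.length) (hij : p.getVert i = p.getVert j) : i = j := by
  induction p generalizing i j with
  | nil => simp at hi hj; omega
  | cons h q ih =>
    rw [Walk.cons_isPath_iff] at hp
    cases i with
    | zero =>
      cases j with
      | zero => rfl
      | succ j =>
        exfalso
        rw [Walk.getVert_zero, Walk.getVert_cons_succ] at hij
        exact hp.2 (hij ▸ getVert_mem_support q j (by simpa using hj))
    | succ i =>
      cases j with
      | zero =>
        exfalso
        rw [Walk.getVert_zero, Walk.getVert_cons_succ] at hij
        exact hp.2 (hij ▸ getVert_mem_support q i (by simpa using hi))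
      | succ j =>
        rw [Walk.getVert_cons_succ, Walk.getVert_cons_succ] at hij
        have := ih hp.1 (by simpa using hi) (by simpa using hj) hij
        omega

/-- a walk of minimal length among those with support inside s -/
lemma exists_min_walk (s : Set V) (x y : V)
    (hne : ∃ p : G.Walk x y, ∀ z ∈ p.support, z ∈ s) :
    ∃ p : G.Walk x y, (∀ z ∈ p.support, z ∈ s) ∧ p.IsPath ∧
      (∀ q : G.Walk x y, (∀ z ∈ q.support, z ∈ s) → p.length ≤ q.length) := by
  classical
  set T := {n : ℕ | ∃ p : G.Walk x y, (∀ z ∈ p.support, z ∈ s) ∧ p.length = n} with hT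
  have hTne : T.Nonempty := by
    obtain ⟨p, hp⟩ := hne
    exact ⟨p.length, p, hp, rfl⟩
  obtain ⟨p, hp, hlen⟩ := Nat.sInf_mem hTne
  refine ⟨p.bypass, fun z hz => hp z (p.support_bypass_subset hz), p.bypass_isPath, ?_⟩
  intro q hq
  calc p.bypass.length ≤ p.length := p.length_bypass_le
    _ ≤ q.length := by rw [hlen]; exact Nat.sInf_le ⟨q, hq, rfl⟩

/-- minimal walks have no chords -/
lemma min_walk_no_chord {s : Set V} {x y : V} {p : G.Walk x y}
    (hsupp : ∀ z ∈ p.support, z ∈ s)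
    (hmin : ∀ q : G.Walk x y, (∀ z ∈ q.support, z ∈ s) → p.length ≤ q.length)
    {i j : ℕ} (hij : i + 1 < j) (hj : j ≤ p.length) :
    ¬ G.Adj (p.getVert i) (p.getVert j) := by
  intro hadj
  have q : G.Walk x y := (wtake p i).append (Walk.cons hadj (p.drop j))
  have hqsupp : ∀ z ∈ ((wtake p i).append (Walk.cons hadj (p.drop j))).support, z ∈ s := by
    intro z hz
    rw [Walk.mem_support_append_iff] at hz
    rcases hz with hz | hz
    · exact hsupp z (wtake_support p i hz)
    · rw [Walk.support_cons] at hz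
      rcases List.mem_cons.mp hz with rfl | hz
      · exact hsupp _ (getVert_mem_support p i (by omega))
      · exact hsupp z (drop_support p j hz)
  have := hmin _ hqsupp
  rw [Walk.length_append, Walk.length_cons, wtake_length p i (by omega),
    drop_length p j hj] at this
  omega







def Avoid (G : SimpleGraph V) (S : Finset V) (u v : V) : Prop :=
  ∃ p : G.Walk u v, ∀ z ∈ p.support, z ∉ S

lemma Avoid.notMem_left {S : Finset V} {u v : V} (h : Avoid G S u v) : u ∉ S := by
  obtain ⟨p, hp⟩ := h; exact hp u p.start_mem_support

lemma Avoid.notMem_right {S : Finset V} {u v : V} (h : Avoid G S u v) : v ∉ S := by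
  obtain ⟨p, hp⟩ := h; exact hp v p.end_mem_support

lemma Avoid.refl {S : Finset V} {u : V} (h : u ∉ S) : Avoid G S u u :=
  ⟨Walk.nil, by simpa using h⟩

lemma Avoid.symm {S : Finset V} {u v : V} (h : Avoid G S u v) : Avoid G S v u := by
  obtain ⟨p, hp⟩ := h
  exact ⟨p.reverse, by simpa using hp⟩

lemma Avoid.trans {S : Finset V} {u v w : V} (h : Avoid G S u v) (h' : Avoid G S v w) :
    Avoid G S u w := by
  obtain ⟨p, hp⟩ := h; obtain ⟨q, hq⟩ := h'
  refine ⟨p.append q, fun z hz => ?_⟩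
  rcases (Walk.mem_support_append_iff p q).1 hz with hz | hz
  exacts [hp z hz, hq z hz]

lemma Avoid.of_adj {S : Finset V} {u v : V} (h : G.Adj u v) (hu : u ∉ S) (hv : v ∉ S) :
    Avoid G S u v :=
  ⟨Walk.cons h Walk.nil, by intro z hz; simp at hz; rcases hz with rfl | rfl <;> assumption⟩

lemma Avoid.adj_trans {S : Finset V} {u v w : V} (h : Avoid G S u v) (hadj : G.Adj v w)
    (hw : w ∉ S) : Avoid G S u w :=
  h.trans (Avoid.of_adj hadj h.notMem_right hw)

def Sep (G : SimpleGraph V) (a b : V) (S : Finset V) : Prop :=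
  a ∉ S ∧ b ∉ S ∧ ¬ Avoid G S a b

lemma Sep.symm {a b : V} {S : Finset V} (h : Sep G a b S) : Sep G b a S :=
  ⟨h.2.1, h.1, fun hc => h.2.2 hc.symm⟩

lemma sep_exists {a b : V} (hab : a ≠ b) (hnadj : ¬ G.Adj a b) :
    Sep G a b (Finset.univ \ {a, b}) := by
  refine ⟨by simp, by simp, ?_⟩
  rintro ⟨p, hp⟩
  have hlen : 0 < p.length := by
    rcases Nat.eq_zero_or_pos p.length with h0 | h0
    · exact absurd (Walk.eq_of_length_eq_zero h0) hab
    · exact h0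
  have h1 := p.adj_getVert_succ (i := 0) hlen
  rw [p.getVert_zero] at h1
  have hmem := hp _ (mem_support_iff_exists_getVert.2 ⟨1, rfl, hlen⟩)
  simp only [Finset.mem_sdiff, Finset.mem_univ, true_and, Finset.mem_insert,
    Finset.mem_singleton, not_not] at hmem
  rcases hmem with h | h
  · rw [h] at h1; exact G.irrefl h1
  · rw [h] at h1; exact hnadj h1

/-- from a path leaving x whose other vertices avoid S, extract a neighbor of x
with an S-avoiding walk to the far end -/
lemma neighbor_of_path {S : Finset V} {x c : V} (q : G.Walk x c) (hq : q.IsPath)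
    (hxc : x ≠ c) (havoid : ∀ z ∈ q.support, z ≠ x → z ∉ S) :
    ∃ u, G.Adj x u ∧ Avoid G S u c := by
  have hnil : ¬ q.Nil := Walk.not_nil_of_ne hxc
  refine ⟨q.getVert 1, q.adj_snd hnil, ?_⟩
  have hxt : x ∉ q.tail.support := by
    have hcons := q.cons_support_tail hnil
    have := hq.support_nodup
    rw [← hcons] at this
    exact (List.nodup_cons.1 this).1
  refine ⟨q.tail, fun z hz => ?_⟩
  have hzx : z ≠ x := fun h => hxt (h ▸ hz)
  have : z ∈ q.support := by
    rw [← q.cons_support_tail hnil]; exact List.mem_cons_of_mem _ hz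
  exact havoid z this hzx

lemma min_sep_neighbor {a b : V} {S : Finset V} (hS : Sep G a b S)
    (hmin : ∀ S' : Finset V, Sep G a b S' → S.card ≤ S'.card) {x : V} (hx : x ∈ S) :
    ∃ u, G.Adj x u ∧ Avoid G S a u := by
  classical
  have hcard : (S.erase x).card < S.card := Finset.card_erase_lt_of_mem hx
  have hnsep : ¬ Sep G a b (S.erase x) := fun h => absurd (hmin _ h) (by omega)
  have hax : a ≠ x := fun h => hS.1 (h ▸ hx)
  have hbx : b ≠ x := fun h => hS.2.1 (h ▸ hx)
  have havoid : Avoid G (S.erase x) a b := by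
    by_contra h
    exact hnsep ⟨by simp [hS.1], by simp [hS.2.1], h⟩
  obtain ⟨p₀, hp₀⟩ := havoid
  set p := p₀.bypass with hpdef
  have hpsupp : ∀ z ∈ p.support, z ∉ S.erase x := fun z hz => hp₀ z (p₀.support_bypass_subset hz)
  have hppath : p.IsPath := p₀.bypass_isPath
  by_cases hxp : x ∈ p.support
  · -- take the part from a to x, reverse it
    have ht := hppath.takeUntil hxp
    set t := p.takeUntil x hxp with htdef
    have hsub := p.support_takeUntil_subset hxp
    have := neighbor_of_path t.reverse ht.reverse (Ne.symm hax) (fun z hz hzx => by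
      rw [Walk.support_reverse, List.mem_reverse] at hz
      have := hpsupp z (hsub hz)
      simp only [Finset.mem_erase] at this
      tauto)
    obtain ⟨u, hu1, hu2⟩ := this
    exact ⟨u, hu1, hu2.symm⟩
  · exfalso
    refine hS.2.2 ⟨p, fun z hz => ?_⟩
    have h1 := hpsupp z hz
    have hzx : z ≠ x := fun h => hxp (h ▸ hz)
    simp only [Finset.mem_erase] at h1
    tauto



lemma fin_sub_val {n : ℕ} (i j : Fin n) : (i - j).val = (i.val + (n - j.val)) % n := by
  rw [Fin.sub_def]; simp [Nat.add_comm]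

lemma mod_helper {n d : ℕ} (h : d < 2*n) (hm : d % n = 1) : d = 1 ∨ d = n + 1 := by
  rcases Nat.lt_or_ge d n with h' | h'
  · left; rwa [Nat.mod_eq_of_lt h'] at hm
  · right; rw [Nat.mod_eq_sub_mod h', Nat.mod_eq_of_lt (by omega)] at hm; omega

lemma cycle_of_two_paths {x y : V} (hxy : x ≠ y) (hnadj : ¬ G.Adj x y)
    (p₁ p₂ : G.Walk x y) (h₁ : p₁.IsPath) (h₂ : p₂.IsPath)
    (hl₁ : 2 ≤ p₁.length) (hl₂ : 2 ≤ p₂.length)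
    (hchord₁ : ∀ i j : ℕ, i + 1 < j → j ≤ p₁.length → ¬ G.Adj (p₁.getVert i) (p₁.getVert j))
    (hchord₂ : ∀ i j : ℕ, i + 1 < j → j ≤ p₂.length → ¬ G.Adj (p₂.getVert i) (p₂.getVert j))
    (hdisj : ∀ i j : ℕ, 0 < i → i < p₁.length → 0 < j → j < p₂.length →
      p₁.getVert i ≠ p₂.getVert j ∧ ¬ G.Adj (p₁.getVert i) (p₂.getVert j)) :
    ∃ n : ℕ, 4 ≤ n ∧ Nonempty (cycleGraph n ↪g G) := by
  classical
  set l₁ := p₁.length with hl₁def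
  set l₂ := p₂.length with hl₂def
  set n := l₁ + l₂ with hndef
  have hn4 : 4 ≤ n := by omega
  set c : G.Walk x x := p₁.append p₂.reverse with hcdef
  have hlen_c : c.length = n := by
    simp [hcdef, Walk.length_append, Walk.length_reverse, hndef, hl₁def, hl₂def]
  have hg₁ : ∀ k, k ≤ l₁ → c.getVert k = p₁.getVert k := by
    intro k hk
    rw [hcdef, Walk.getVert_append]
    split
    · rfl
    · have hkl : k = l₁ := by omega
      subst hkl
      rw [Nat.sub_self, Walk.getVert_zero]
      exact (p₁.getVert_length).symm
  have hg₂ : ∀ k, l₁ ≤ k → k ≤ n → c.getVert k = p₂.getVert (n - k) := by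
    intro k hk1 hk2
    rw [hcdef, Walk.getVert_append]
    split
    · omega
    · rw [Walk.getVert_reverse]; congr 1; omega
  -- injectivity
  have hinj : ∀ k k' : ℕ, k < k' → k' < n → c.getVert k ≠ c.getVert k' := by
    intro k k' hkk' hk'n heq
    rcases Nat.lt_or_ge l₁ k' with hc1 | hc1
    · -- k' > l₁
      rcases Nat.lt_or_ge k l₁ with hc2 | hc2
      · -- k < l₁ < k'
        rcases Nat.eq_zero_or_pos k with rfl | hk0
        · -- k = 0 : x = p₂.getVert (n - k')
          rw [hg₁ 0 (by omega), Walk.getVert_zero] at heq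
          rw [hg₂ k' (by omega) (by omega)] at heq
          have := IsPath.getVert_inj h₂ (i := 0) (j := n - k') (by omega) (by omega)
            (by rw [Walk.getVert_zero]; exact heq)
          omega
        · -- interior vs interior
          rw [hg₁ k (by omega), hg₂ k' (by omega) (by omega)] at heq
          exact (hdisj k (n - k') hk0 (by omega) (by omega) (by omega)).1 heq
      · -- l₁ ≤ k < k'
        rw [hg₂ k (by omega) (by omega), hg₂ k' (by omega) (by omega)] at heq
        have := IsPath.getVert_inj h₂ (i := n - k) (j := n - k') (by omega) (by omega) heq
        omega
    · -- k < k' ≤ l₁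
      rw [hg₁ k (by omega), hg₁ k' (by omega)] at heq
      have := IsPath.getVert_inj h₁ (i := k) (j := k') (by omega) (by omega) heq
      omega
  -- chord freeness
  have hch : ∀ k k' : ℕ, k < k' → k' < n → G.Adj (c.getVert k) (c.getVert k') →
      k' = k + 1 ∨ (k = 0 ∧ k' = n - 1) := by
    intro k k' hkk' hk'n hadj
    rcases Nat.lt_or_ge l₁ k' with hc1 | hc1
    · rcases Nat.lt_or_ge k l₁ with hc2 | hc2
      · rcases Nat.eq_zero_or_pos k with rfl | hk0
        · right
          rw [hg₁ 0 (by omega), Walk.getVert_zero, hg₂ k' (by omega) (by omega)] at hadj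
          have hadj' : G.Adj (p₂.getVert 0) (p₂.getVert (n - k')) := by
            rw [p₂.getVert_zero]; exact hadj
          by_cases hcase : 0 + 1 < n - k'
          · exact absurd hadj' (hchord₂ 0 (n - k') hcase (by omega))
          · constructor
            · rfl
            · -- n - k' ≤ 1, and n - k' ≥ 1 so k' = n - 1
              omega
        · exfalso
          rw [hg₁ k (by omega), hg₂ k' (by omega) (by omega)] at hadj
          exact (hdisj k (n - k') hk0 (by omega) (by omega) (by omega)).2 hadj
      · left
        rw [hg₂ k (by omega) (by omega), hg₂ k' (by omega) (by omega)] at hadj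
        by_cases hcase : (n - k') + 1 < n - k
        · exact absurd hadj.symm (hchord₂ (n - k') (n - k) hcase (by omega))
        · omega
    · left
      rw [hg₁ k (by omega), hg₁ k' (by omega)] at hadj
      by_cases hcase : k + 1 < k'
      · exact absurd hadj (hchord₁ k k' hcase (by omega))
      · omega
  -- consecutive adjacency
  have hconsec : ∀ k : ℕ, k < n → G.Adj (c.getVert k) (c.getVert ((k+1) % n)) := by
    intro k hk
    rcases Nat.lt_or_ge (k+1) n with h' | h'
    · rw [Nat.mod_eq_of_lt h']
      exact c.adj_getVert_succ (by omega)
    · have hk1 : k + 1 = n := by omega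
      have : (k+1) % n = 0 := by rw [hk1, Nat.mod_self]
      rw [this]
      have h3 := c.adj_getVert_succ (i := k) (by omega)
      rw [show k + 1 = c.length by omega, Walk.getVert_length] at h3
      show G.Adj (c.getVert k) (c.getVert 0)
      rw [c.getVert_zero]
      exact h3
  -- build embedding
  refine ⟨n, hn4, ⟨⟨⟨fun i => c.getVert i.val, ?_⟩, ?_⟩⟩⟩
  · intro i j hij
    simp only at hij
    rcases lt_trichotomy i.val j.val with h' | h' | h'
    · exact absurd hij (hinj _ _ h' j.isLt)
    · exact Fin.ext h'
    · exact absurd hij.symm (hinj _ _ h' i.isLt)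
  · intro i j
    show G.Adj (c.getVert i.val) (c.getVert j.val) ↔ (cycleGraph n).Adj i j
    constructor
    · intro hadj
      rw [cycleGraph_adj', fin_sub_val, fin_sub_val]
      rcases lt_trichotomy i.val j.val with h' | h' | h'
      · rcases hch i.val j.val h' j.isLt hadj with h'' | ⟨h1, h2⟩
        · right
          have : j.val + (n - i.val) = n + 1 := by omega
          rw [this, Nat.add_mod_left, Nat.mod_eq_of_lt (by omega)]
        · left
          have : i.val + (n - j.val) = 1 := by omega
          rw [this, Nat.mod_eq_of_lt (by omega)]
      · exact absurd (Fin.ext h' : i = j) (by rintro rfl; exact G.irrefl hadj)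
      · rcases hch j.val i.val h' i.isLt hadj.symm with h'' | ⟨h1, h2⟩
        · left
          have : i.val + (n - j.val) = n + 1 := by omega
          rw [this, Nat.add_mod_left, Nat.mod_eq_of_lt (by omega)]
        · right
          have : j.val + (n - i.val) = 1 := by omega
          rw [this, Nat.mod_eq_of_lt (by omega)]
    · intro hadj
      rw [cycleGraph_adj', fin_sub_val, fin_sub_val] at hadj
      have hi := i.isLt
      have hj := j.isLt
      rcases hadj with h' | h'
      · rcases mod_helper (by omega) h' with h'' | h''
        · -- i.val + n - j.val = 1 : j = i + 1? i.val +(n - j.val) = 1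
          have hij : j.val = i.val + n - 1 := by omega
          -- so i.val = 0, j.val = n - 1
          have hi0 : i.val = 0 := by omega
          have hjn : j.val = n - 1 := by omega
          have := hconsec (n-1) (by omega)
          rw [show (n - 1 + 1) % n = 0 by rw [show n - 1 + 1 = n by omega, Nat.mod_self]] at this
          rw [hi0, hjn]
          exact this.symm
        · have : i.val = j.val + 1 := by omega
          have h2 := hconsec j.val (by omega)
          rw [Nat.mod_eq_of_lt (by omega), ← this] at h2
          exact h2.symm
      · rcases mod_helper (by omega) h' with h'' | h''
        · have hj0 : j.val = 0 := by omega
          have hin : i.val = n - 1 := by omega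
          have := hconsec (n-1) (by omega)
          rw [show (n - 1 + 1) % n = 0 by rw [show n - 1 + 1 = n by omega, Nat.mod_self]] at this
          rw [hj0, hin]
          exact this
        · have : j.val = i.val + 1 := by omega
          have h2 := hconsec i.val (by omega)
          rw [Nat.mod_eq_of_lt (by omega), ← this] at h2
          exact h2



lemma avoid_of_walk {S : Finset V} {u v : V} (p : G.Walk u v)
    (hp : ∀ z ∈ p.support, z ∉ S) : Avoid G S u v := ⟨p, hp⟩

lemma Avoid.elim' {S : Finset V} {u v : V} (h : Avoid G S u v) :
    ∃ p : G.Walk u v, ∀ z ∈ p.support, z ∉ S := h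

def Simplicial (G : SimpleGraph V) (v : V) : Prop := G.IsClique (G.neighborSet v)

/-- half of the cycle: a minimal path from x to y through the `c`-side -/
lemma side_path {a x y : V} {S : Finset V} (hnAdj : ¬ G.Adj x y) (hxy : x ≠ y)
    (hxS : x ∈ S) (hyS : y ∈ S)
    {u₁ u₂ : V} (hxu₁ : G.Adj x u₁) (hau₁ : Avoid G S a u₁)
    (hyu₂ : G.Adj y u₂) (hau₂ : Avoid G S a u₂) :
    ∃ p : G.Walk x y, p.IsPath ∧ 2 ≤ p.length ∧
      (∀ k, 0 < k → k < p.length → Avoid G S a (p.getVert k)) ∧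
      (∀ i j : ℕ, i + 1 < j → j ≤ p.length → ¬ G.Adj (p.getVert i) (p.getVert j)) := by
  classical
  set s : Set V := {z | z = x ∨ z = y ∨ Avoid G S a z} with hsdef
  have hne : ∃ p : G.Walk x y, ∀ z ∈ p.support, z ∈ s := by
    obtain ⟨q, hq⟩ := (hau₁.symm.trans hau₂).elim'
    refine ⟨Walk.cons hxu₁ (q.append (Walk.cons hyu₂.symm Walk.nil)), ?_⟩
    intro z hz
    rw [Walk.support_cons] at hz
    rcases List.mem_cons.mp hz with rfl | hz
    · exact Or.inl rfl
    rcases (Walk.mem_support_append_iff _ _).1 hz with hz | hz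
    · exact Or.inr (Or.inr (hau₁.trans (avoid_of_walk (q.takeUntil z hz)
        (fun w hw => hq w (q.support_takeUntil_subset hz hw)))))
    · rw [Walk.support_cons] at hz
      rcases List.mem_cons.mp hz with rfl | hz
      · exact Or.inr (Or.inr hau₂)
      · simp at hz
        exact Or.inr (Or.inl hz)
  obtain ⟨p, hpsupp, hppath, hpmin⟩ := exists_min_walk s x y hne
  have hlen : 2 ≤ p.length := by
    rcases Nat.lt_or_ge p.length 2 with h | h
    · interval_cases hval : p.length
      · exact absurd (Walk.eq_of_length_eq_zero hval) hxy
      · exfalso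
        have h1 := p.adj_getVert_succ (i := 0) (by omega)
        rw [p.getVert_zero, show (0+1) = p.length by omega, p.getVert_length] at h1
        exact hnAdj h1
    · exact h
  refine ⟨p, hppath, hlen, ?_, fun i j h1 h2 => min_walk_no_chord hpsupp hpmin h1 h2⟩
  intro k hk0 hkl
  have hmem := hpsupp _ (getVert_mem_support p k (by omega))
  rcases hmem with h | h | h
  · exfalso
    have := IsPath.getVert_inj hppath (i := k) (j := 0) (by omega) (by omega)
      (by rw [p.getVert_zero]; exact h)
    omega
  · exfalso
    have := IsPath.getVert_inj hppath (i := k) (j := p.length) (by omega) (by omega)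
      (by rw [p.getVert_length]; exact h)
    omega
  · exact h

lemma sep_min_clique {a b : V} {S : Finset V} (hS : Sep G a b S)
    (hmin : ∀ S' : Finset V, Sep G a b S' → S.card ≤ S'.card)
    (hchordal : Chordal' G) {x y : V} (hx : x ∈ S) (hy : y ∈ S) (hxy : x ≠ y) :
    G.Adj x y := by
  by_contra hnadj
  obtain ⟨u₁, hxu₁, hau₁⟩ := min_sep_neighbor hS hmin hx
  obtain ⟨u₂, hyu₂, hau₂⟩ := min_sep_neighbor hS hmin hy
  have hS' := hS.symm
  have hmin' : ∀ S' : Finset V, Sep G b a S' → S.card ≤ S'.card :=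
    fun S' h => hmin S' h.symm
  obtain ⟨w₁, hxw₁, hbw₁⟩ := min_sep_neighbor hS' hmin' hx
  obtain ⟨w₂, hyw₂, hbw₂⟩ := min_sep_neighbor hS' hmin' hy
  obtain ⟨p₁, h₁path, h₁len, h₁int, h₁chord⟩ :=
    side_path hnadj hxy hx hy hxu₁ hau₁ hyu₂ hau₂
  obtain ⟨p₂, h₂path, h₂len, h₂int, h₂chord⟩ :=
    side_path hnadj hxy hx hy hxw₁ hbw₁ hyw₂ hbw₂
  have hdisj : ∀ i j : ℕ, 0 < i → i < p₁.length → 0 < j → j < p₂.length →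
      p₁.getVert i ≠ p₂.getVert j ∧ ¬ G.Adj (p₁.getVert i) (p₂.getVert j) := by
    intro i j hi0 hil hj0 hjl
    have hA := h₁int i hi0 hil
    have hB := h₂int j hj0 hjl
    constructor
    · intro heq
      exact hS.2.2 (hA.trans (heq ▸ hB.symm))
    · intro hadj
      exact hS.2.2 ((hA.adj_trans hadj hB.notMem_right).trans hB.symm)
  obtain ⟨n, hn4, ⟨emb⟩⟩ := cycle_of_two_paths hxy hnadj p₁ p₂ h₁path h₂path
    h₁len h₂len h₁chord h₂chord hdisj
  exact (hchordal n hn4).false emb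

lemma chordal_induce (hc : Chordal' G) (s : Set V) : Chordal' (G.induce s) :=
  fun n hn => ⟨fun e => (hc n hn).false ((SimpleGraph.Embedding.induce s).comp e)⟩

lemma simplicial_of_induce {U : Set V} {v : V} (hv : v ∈ U)
    (hcl : ∀ z, G.Adj v z → z ∈ U)
    (hs : Simplicial (G.induce U) ⟨v, hv⟩) : Simplicial G v := by
  intro z hz z' hz' hne
  have hzU : z ∈ U := hcl z hz
  have hz'U : z' ∈ U := hcl z' hz'
  have h1 : (⟨z, hzU⟩ : U) ∈ (G.induce U).neighborSet ⟨v, hv⟩ := by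
    simp only [mem_neighborSet, comap_adj, Function.Embedding.coe_subtype]
    exact hz
  have h2 : (⟨z', hz'U⟩ : U) ∈ (G.induce U).neighborSet ⟨v, hv⟩ := by
    simp only [mem_neighborSet, comap_adj, Function.Embedding.coe_subtype]
    exact hz'
  have := hs h1 h2 (by simpa [Subtype.ext_iff] using hne)
  simpa using this

theorem dirac : ∀ (N : ℕ) (W : Type) [Fintype W] [DecidableEq W] (H : SimpleGraph W),
    Fintype.card W ≤ N → Chordal' H →
    (∀ v w : W, v ≠ w → H.Adj v w) ∨
    ∃ v w, v ≠ w ∧ ¬ H.Adj v w ∧ Simplicial H v ∧ Simplicial H w := by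
  intro N
  induction N with
  | zero =>
    intro W _ _ H hcard _
    left
    have : IsEmpty W := by
      rw [← Fintype.card_eq_zero_iff]; omega
    exact fun v => (this.false v).elim
  | succ N ih =>
    intro W _ _ H hcard hch
    by_cases hcomp : ∀ v w : W, v ≠ w → H.Adj v w
    · exact Or.inl hcomp
    right
    push_neg at hcomp
    obtain ⟨a, b, hab, hnadj⟩ := hcomp
    -- minimal separator
    classical
    have hTne : {k : ℕ | ∃ S : Finset W, Sep H a b S ∧ S.card = k}.Nonempty :=
      ⟨_, _, sep_exists hab hnadj, rfl⟩
    obtain ⟨S, hS, hcardS⟩ := Nat.sInf_mem hTne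
    have hminS : ∀ S' : Finset W, Sep H a b S' → S.card ≤ S'.card := by
      intro S' h
      rw [hcardS]
      exact Nat.sInf_le ⟨S', h, rfl⟩
    have hclique := fun {x} hx {y} hy hxy => sep_min_clique hS hminS hch (x := x) (y := y) hx hy hxy
    -- key: simplicial vertex on each side
    have key : ∀ c d : W, c ∉ S → d ∉ S → ¬ Avoid H S c d →
        ∃ v, Avoid H S c v ∧ Simplicial H v := by
      intro c d hcS hdS hnAv
      set U : Set W := {z | Avoid H S c z} ∪ ↑S with hUdef
      have hdU : d ∉ U := by
        rintro (h | h)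
        exacts [hnAv h, hdS h]
      have hcl : ∀ v ∈ U, v ∉ (↑S : Set W) → ∀ z, H.Adj v z → z ∈ U := by
        intro v hvU hvS z hadj
        by_cases hzS : z ∈ S
        · exact Or.inr hzS
        · rcases hvU with hvA | hvS'
          · exact Or.inl (hvA.adj_trans hadj hzS)
          · exact absurd hvS' hvS
      have hcardU : Fintype.card ↥U ≤ N := by
        have := Fintype.card_lt_of_injective_of_notMem (Subtype.val : ↥U → W)
          Subtype.val_injective (b := d) (by simpa using hdU)
        have heq : Fintype.card ↥U = Fintype.card { x // x ∈ U } :=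
          Fintype.card_congr (Equiv.refl _)
        omega
      have hchU : Chordal' (H.induce U) := chordal_induce hch U
      have hcU : c ∈ U := Or.inl (Avoid.refl hcS)
      have hclc : ∀ z, H.Adj c z → z ∈ U := hcl c hcU (by simpa using hcS)
      rcases ih ↥U (H.induce U) hcardU hchU with hcompU | ⟨u, w, huw, hnadjU, hsu, hsw⟩
      · -- complete: c is simplicial
        refine ⟨c, Avoid.refl hcS, ?_⟩
        intro z hz z' hz' hne
        have h := hcompU ⟨z, hclc z hz⟩ ⟨z', hclc z' hz'⟩ (by simpa [Subtype.ext_iff] using hne)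
        simpa using h
      · -- at least one of u, w is on the c-side
        have hnotboth : ¬ ((u : W) ∈ S ∧ (w : W) ∈ S) := by
          rintro ⟨h1, h2⟩
          have : (u : W) ≠ w := fun h => huw (Subtype.ext h)
          exact hnadjU (by exact hclique h1 h2 this)
        have hone : ∃ v : ↥U, (v : W) ∈ {z | Avoid H S c z} ∧
            Simplicial (H.induce U) v := by
          by_cases hu : (u : W) ∈ S
          · refine ⟨w, ?_, hsw⟩
            rcases w.2 with h | h
            · exact h
            · exact absurd ⟨hu, h⟩ hnotboth
          · refine ⟨u, ?_, hsu⟩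
            rcases u.2 with h | h
            · exact h
            · exact absurd h hu
        obtain ⟨v, hvA, hsv⟩ := hone
        refine ⟨(v : W), hvA, ?_⟩
        have : v = ⟨(v : W), v.2⟩ := Subtype.ext rfl
        exact simplicial_of_induce v.2
          (hcl (v : W) v.2 (by simpa using hvA.notMem_right))
          (by rw [← this]; exact hsv)
    obtain ⟨v₁, hv₁, hs₁⟩ := key a b hS.1 hS.2.1 hS.2.2
    obtain ⟨v₂, hv₂, hs₂⟩ := key b a hS.2.1 hS.1 (fun h => hS.2.2 h.symm)
    refine ⟨v₁, v₂, ?_, ?_, hs₁, hs₂⟩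
    · intro h
      exact hS.2.2 (hv₁.trans (h ▸ hv₂.symm))
    · intro h
      exact hS.2.2 ((hv₁.adj_trans h hv₂.notMem_right).trans hv₂.symm)

lemma exists_simplicial (hch : Chordal' G) (hne : Nonempty V) : ∃ v, Simplicial G v := by
  rcases dirac (Fintype.card V) V G le_rfl hch with hcomp | ⟨v, _, _, _, hs, _⟩
  · obtain ⟨v⟩ := hne
    refine ⟨v, ?_⟩
    intro z hz z' hz' hne'
    exact hcomp z z' hne'
  · exact ⟨v, hs⟩



def IsPerfectEliminationOrdering' {ℓ : ℕ} (G : SimpleGraph (Fin ℓ))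
    (σ : Equiv.Perm (Fin ℓ)) : Prop :=
  ∀ i : Fin ℓ, G.IsClique {u | ∃ j : Fin ℓ, j < i ∧ u = σ j ∧ G.Adj (σ j) (σ i)}

theorem peo_exists : ∀ (ℓ : ℕ) (G : SimpleGraph (Fin ℓ)), Chordal' G →
    ∃ σ : Equiv.Perm (Fin ℓ), IsPerfectEliminationOrdering' G σ := by
  intro ℓ
  induction ℓ with
  | zero => exact fun G _ => ⟨1, fun i => i.elim0⟩
  | succ ℓ ih =>
    intro G hch
    obtain ⟨v, hv⟩ := exists_simplicial hch ⟨0⟩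
    have hcard : Fintype.card {x : Fin (ℓ+1) // x ≠ v} = ℓ := by
      simp [Fintype.card_subtype_compl, Fintype.card_subtype_eq]
    let e : Fin ℓ ≃ {x : Fin (ℓ+1) // x ≠ v} := (Fintype.equivFinOfCardEq hcard).symm
    let f : Fin ℓ → Fin (ℓ+1) := fun i => (e i : Fin (ℓ+1))
    have hfinj : Function.Injective f := fun i j h => e.injective (Subtype.ext h)
    let G' : SimpleGraph (Fin ℓ) := G.comap f
    have hch' : Chordal' G' := fun n hn =>
      ⟨fun emb => (hch n hn).false ((SimpleGraph.Embedding.comap ⟨f, hfinj⟩ G).comp emb)⟩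
    obtain ⟨σ', hσ'⟩ := ih G' hch'
    let E3 : Option (Fin ℓ) ≃ Fin (ℓ+1) := ((Equiv.optionSubtype v).symm (σ'.trans e) : _)
    let σ : Equiv.Perm (Fin (ℓ+1)) := finSuccEquivLast.trans E3
    have hσlast : σ (Fin.last ℓ) = v := by
      simp only [σ, Equiv.trans_apply, finSuccEquivLast_last]
      exact ((Equiv.optionSubtype v).symm (σ'.trans e)).property
    have hσcast : ∀ i : Fin ℓ, σ (Fin.castSucc i) = f (σ' i) := by
      intro i
      simp only [σ, Equiv.trans_apply, finSuccEquivLast_castSucc]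
      rfl
    refine ⟨σ, ?_⟩
    intro i
    refine Fin.lastCases ?_ ?_ i
    · -- i = last : earlier neighbors are a subset of N(v)
      intro u hu u' hu' hne
      obtain ⟨j, hj, rfl, hadj⟩ := hu
      obtain ⟨j', hj', rfl, hadj'⟩ := hu'
      rw [hσlast] at hadj hadj'
      exact hv hadj.symm hadj'.symm hne
    · intro i' u hu u' hu' hne
      obtain ⟨j, hj, rfl, hadj⟩ := hu
      obtain ⟨j₂, hj₂, rfl, hadj₂⟩ := hu'
      have hjne : j ≠ Fin.last ℓ := Fin.ne_last_of_lt hj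
      have hj₂ne : j₂ ≠ Fin.last ℓ := Fin.ne_last_of_lt hj₂
      obtain ⟨j', rfl⟩ := Fin.exists_castSucc_eq.2 hjne
      obtain ⟨j₂', rfl⟩ := Fin.exists_castSucc_eq.2 hj₂ne
      rw [hσcast j', hσcast j₂'] at hne ⊢
      rw [hσcast j', hσcast i'] at hadj
      rw [hσcast j₂', hσcast i'] at hadj₂
      have hlt : j' < i' := by
        simpa [Fin.castSucc_lt_castSucc_iff] using hj
      have hlt₂ : j₂' < i' := by
        simpa [Fin.castSucc_lt_castSucc_iff] using hj₂
      have m1 : σ' j' ∈ {u | ∃ j, j < i' ∧ u = σ' j ∧ G'.Adj (σ' j) (σ' i')} :=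
        ⟨j', hlt, rfl, hadj⟩
      have m2 : σ' j₂' ∈ {u | ∃ j, j < i' ∧ u = σ' j ∧ G'.Adj (σ' j) (σ' i')} :=
        ⟨j₂', hlt₂, rfl, hadj₂⟩
      have := hσ' i' m1 m2 (fun h => hne (congrArg f h))
      exact this


end ChordalAux

/-- A graph is chordal if every cycle of length at least `4` has a chord;
equivalently, it contains no induced cycle of length at least `4`. -/
def IsChordal {ℓ : ℕ} (G : SimpleGraph (Fin ℓ)) : Prop :=
  ∀ n : ℕ, 4 ≤ n → IsEmpty (SimpleGraph.cycleGraph n ↪g G)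

/-- An ordering `σ 0, σ 1, …` of the vertices is a perfect elimination ordering if
for each `i`, the earlier neighbors of `σ i` form a clique. -/
def IsPerfectEliminationOrdering {ℓ : ℕ} (G : SimpleGraph (Fin ℓ))
    (σ : Equiv.Perm (Fin ℓ)) : Prop :=
  ∀ i : Fin ℓ, G.IsClique {u | ∃ j : Fin ℓ, j < i ∧ u = σ j ∧ G.Adj (σ j) (σ i)}

/-- A finite simple graph is chordal if and only if it admits a perfect
elimination ordering. -/
theorem isChordal_iff_exists_perfectEliminationOrdering {ℓ : ℕ}
    (G : SimpleGraph (Fin ℓ)) :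
    IsChordal G ↔ ∃ σ : Equiv.Perm (Fin ℓ), IsPerfectEliminationOrdering G σ := by
  constructor
  · intro h
    exact ChordalAux.peo_exists ℓ G h
  · rintro ⟨σ, hσ⟩
    exact peo_chordal G σ hσ
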